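/- For every n ≥ 0 the identity (x²−1)·P_n^(1)(x;ζ) = p_n·P_n^(0)(x;ζ) + q_n·P_{n+1}^(0)(x;ζ) + r_{n+1}·P_{n+2}^(0)(x;ζ) holds identically in x. Moreover q_n admits the two closed-form expressions q_n = (c_{n+1}^(0)/c_n^(1))·Σ_{i=1}^{n+1} (x_{i,n+1}^(1) − x_{i,n+1}^(0)) = (c_n^(1)/c_{n+1}^(0))·((Σ_{i=1}^{n+2} x_{i,n+2}^(0)) − (Σ_{i=1}^{n} x_{i,n}^(1))). -/

import Mathlib

open MeasureTheory Polynomial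

noncomputable def besselK (n : ℕ) (ζ : ℝ) : ℝ :=
  ∫ t in Set.Ioi (0 : ℝ), Real.cosh ((n : ℝ) * t) * Real.exp (-ζ * Real.cosh t)

noncomputable def Gfun (ζ : ℝ) : ℝ := besselK 2 ζ / besselK 1 ζ

noncomputable def wgt (ℓ : ℕ) (ζ x : ℝ) : ℝ :=
  (x ^ 2 - 1) ^ ((ℓ : ℝ) - 1 / 2) * Real.exp (-ζ * x) / besselK 1 ζ


lemma aux_topcoeff (Q : ℕ → Polynomial ℝ) (hdeg : ∀ k, (Q k).natDegree = k)
    (b : ℕ → ℝ) (N : ℕ) :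
    (∑ k ∈ Finset.range (N+1), C (b k) * Q k).coeff N = b N * (Q N).coeff N := by
  rw [finset_sum_coeff, Finset.sum_range_succ]
  rw [Finset.sum_eq_zero, zero_add, coeff_C_mul]
  intro k hk
  rw [coeff_C_mul, coeff_eq_zero_of_natDegree_lt, mul_zero]
  rw [hdeg k]; exact Finset.mem_range.mp hk

lemma aux_nextcoeff (Q : ℕ → Polynomial ℝ) (hdeg : ∀ k, (Q k).natDegree = k)
    (b : ℕ → ℝ) (N : ℕ) :
    (∑ k ∈ Finset.range (N+2), C (b k) * Q k).coeff N
      = b N * (Q N).coeff N + b (N+1) * (Q (N+1)).coeff N := by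
  rw [finset_sum_coeff, Finset.sum_range_succ, Finset.sum_range_succ]
  rw [Finset.sum_eq_zero, zero_add, coeff_C_mul, coeff_C_mul]
  intro k hk
  rw [coeff_C_mul, coeff_eq_zero_of_natDegree_lt, mul_zero]
  rw [hdeg k]; exact Finset.mem_range.mp hk

lemma aux_subcoeff (lc : ℝ) (z : ℕ → ℝ) (n : ℕ) (hn : 1 ≤ n) :
    (C lc * ∏ i ∈ Finset.Icc 1 n, (X - C (z i))).coeff (n-1)
      = -(lc * ∑ i ∈ Finset.Icc 1 n, z i) := by
  have hdeg : (∏ i ∈ Finset.Icc 1 n, (X - C (z i))).natDegree = n := by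
    rw [natDegree_prod_of_monic _ _ (fun i _ => monic_X_sub_C _)]
    simp [natDegree_X_sub_C]
  have hpos : 0 < (∏ i ∈ Finset.Icc 1 n, (X - C (z i))).natDegree := by omega
  have := nextCoeff_of_natDegree_pos hpos
  rw [prod_X_sub_C_nextCoeff, hdeg] at this
  rw [coeff_C_mul, ← this]
  ring

lemma aux_expand (Q : ℕ → Polynomial ℝ) (hdeg : ∀ k, (Q k).natDegree = k)
    (hlc : ∀ k, (Q k).leadingCoeff ≠ 0) :
    ∀ N (f : Polynomial ℝ), f.natDegree ≤ N →
      ∃ b : ℕ → ℝ, f = ∑ k ∈ Finset.range (N+1), C (b k) * Q k := by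
  intro N
  induction N with
  | zero =>
    intro f hf
    have hQ0 : Q 0 = C ((Q 0).coeff 0) := (Polynomial.eq_C_of_natDegree_le_zero (hdeg 0).le)
    have hc : (Q 0).coeff 0 ≠ 0 := by
      have := hlc 0; rwa [leadingCoeff, hdeg 0] at this
    refine ⟨fun _ => f.coeff 0 / (Q 0).coeff 0, ?_⟩
    rw [Finset.sum_range_one]
    show f = C (f.coeff 0 / (Q 0).coeff 0) * Q 0
    conv_rhs => rw [hQ0]
    rw [coeff_C_zero, ← C_mul, div_mul_cancel₀ _ hc]
    exact Polynomial.eq_C_of_natDegree_le_zero hf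
  | succ N ih =>
    intro f hf
    set a := f.coeff (N+1) / (Q (N+1)).leadingCoeff with ha
    have hc : (Q (N+1)).leadingCoeff ≠ 0 := hlc (N+1)
    have hg : (f - C a * Q (N+1)).natDegree ≤ N := by
      apply natDegree_le_iff_coeff_eq_zero.mpr
      intro m hm
      rw [coeff_sub, coeff_C_mul]
      rcases eq_or_lt_of_le (Nat.succ_le_of_lt hm) with h | h
      · have : (Q (N+1)).coeff m = (Q (N+1)).leadingCoeff := by
          rw [leadingCoeff, hdeg (N+1), ← h]
        rw [this, ha, div_mul_cancel₀ _ hc, ← h]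
        have : f.coeff (N+1) = f.coeff (N+1) := rfl
        simp
      · rw [coeff_eq_zero_of_natDegree_lt (lt_of_le_of_lt hf h),
          coeff_eq_zero_of_natDegree_lt (by rw [hdeg]; omega), mul_zero, sub_zero]
    obtain ⟨b, hb⟩ := ih _ hg
    refine ⟨fun k => if k = N+1 then a else b k, ?_⟩
    rw [Finset.sum_range_succ]
    show f = (∑ x ∈ Finset.range (N+1), C (if x = N+1 then a else b x) * Q x)
      + C (if N+1 = N+1 then a else b (N+1)) * Q (N+1)
    rw [if_pos rfl]
    have : ∑ k ∈ Finset.range (N+1), C (if k = N+1 then a else b k) * Q k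
        = ∑ k ∈ Finset.range (N+1), C (b k) * Q k := by
      apply Finset.sum_congr rfl
      intro k hk
      rw [if_neg (by have := Finset.mem_range.mp hk; omega)]
    rw [this, ← hb]
    ring

lemma aux_integrable (w : ℝ → ℝ) (hwm : Measurable w)
    (hw0 : ∀ x ∈ Set.Ioi (1:ℝ), 0 ≤ w x) (Q : ℕ → Polynomial ℝ)
    (hd : ∀ n, Integrable (fun x => (Q n).eval x * (Q n).eval x * w x)
      (volume.restrict (Set.Ioi 1)))
    (m n : ℕ) : Integrable (fun x => (Q m).eval x * (Q n).eval x * w x)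
      (volume.restrict (Set.Ioi 1)) := by
  apply Integrable.mono' ((hd m).add (hd n))
  · exact (((Q m).continuous_aeval.measurable.mul
      (Q n).continuous_aeval.measurable).mul hwm).aestronglyMeasurable
  · rw [ae_restrict_iff' measurableSet_Ioi]
    refine ae_of_all _ fun x hx => ?_
    have hw := hw0 x hx
    simp only [Pi.add_apply]
    rw [Real.norm_eq_abs, abs_le]
    constructor <;> nlinarith [sq_nonneg ((Q m).eval x + (Q n).eval x),
      sq_nonneg ((Q m).eval x - (Q n).eval x),
      mul_nonneg (sq_nonneg ((Q m).eval x + (Q n).eval x)) hw,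
      mul_nonneg (sq_nonneg ((Q m).eval x - (Q n).eval x)) hw]

lemma aux_coeff (w : ℝ → ℝ) (Q : ℕ → Polynomial ℝ)
    (horth : ∀ m n, (∫ x in Set.Ioi (1:ℝ), (Q m).eval x * (Q n).eval x * w x)
      = if m = n then (1:ℝ) else 0)
    (hint : ∀ m n, Integrable (fun x => (Q m).eval x * (Q n).eval x * w x)
      (volume.restrict (Set.Ioi 1)))
    (b : ℕ → ℝ) (N j : ℕ) (f : Polynomial ℝ)
    (hf : f = ∑ k ∈ Finset.range (N+1), C (b k) * Q k) :
    (∫ x in Set.Ioi (1:ℝ), f.eval x * (Q j).eval x * w x)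
      = if j ≤ N then b j else 0 := by
  have h1 : ∀ x : ℝ, f.eval x * (Q j).eval x * w x
      = ∑ k ∈ Finset.range (N+1), b k * ((Q k).eval x * (Q j).eval x * w x) := by
    intro x
    rw [hf, eval_finset_sum, Finset.sum_mul, Finset.sum_mul]
    refine Finset.sum_congr rfl fun k _ => ?_
    simp only [eval_mul, eval_C]
    ring
  simp_rw [h1]
  rw [integral_finset_sum _ (fun k _ => ((hint k j).const_mul (b k)))]
  simp_rw [integral_const_mul, horth]
  simp only [mul_ite, mul_one, mul_zero]
  rw [Finset.sum_ite_eq' (Finset.range (N+1))]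
  simp [Nat.lt_succ_iff]

lemma besselK_one_nonneg (ζ : ℝ) : 0 ≤ besselK 1 ζ := by
  apply setIntegral_nonneg measurableSet_Ioi
  intro t _
  exact mul_nonneg (Real.cosh_pos _).le (Real.exp_pos _).le

lemma wgt_measurable (ℓ : ℕ) (ζ : ℝ) : Measurable (wgt ℓ ζ) := by
  unfold wgt
  fun_prop

lemma wgt_nonneg (ℓ : ℕ) (ζ : ℝ) : ∀ x ∈ Set.Ioi (1:ℝ), 0 ≤ wgt ℓ ζ x := by
  intro x hx
  unfold wgt
  apply div_nonneg _ (besselK_one_nonneg ζ)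
  exact mul_nonneg (Real.rpow_nonneg (by nlinarith [Set.mem_Ioi.mp hx]) _) (Real.exp_pos _).le

lemma wgt_rel (ζ : ℝ) : ∀ x ∈ Set.Ioi (1:ℝ), wgt 1 ζ x = (x^2 - 1) * wgt 0 ζ x := by
  intro x hx
  have hx1 : (1:ℝ) < x := hx
  have ht : (0:ℝ) < x^2 - 1 := by nlinarith
  unfold wgt
  rw [show ((1:ℕ):ℝ) - 1/2 = 1 + (((0:ℕ):ℝ) - 1/2) by push_cast; ring]
  rw [Real.rpow_add ht, Real.rpow_one]
  ring

theorem stmt6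
    (ζ : ℝ) (hζ : 0 < ζ)
    (P0 P1 : ℕ → Polynomial ℝ) (lc0 lc1 : ℕ → ℝ)
    (hdeg0 : ∀ n, (P0 n).natDegree = n)
    (hdeg1 : ∀ n, (P1 n).natDegree = n)
    (hlc0 : ∀ n, (P0 n).leadingCoeff = lc0 n)
    (hlc1 : ∀ n, (P1 n).leadingCoeff = lc1 n)
    (hlc0pos : ∀ n, 0 < lc0 n)
    (hlc1pos : ∀ n, 0 < lc1 n)
    (horth0 : ∀ m n, (∫ x in Set.Ioi (1 : ℝ),
        (P0 m).eval x * (P0 n).eval x * wgt 0 ζ x) = if m = n then (1 : ℝ) else 0)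
    (horth1 : ∀ m n, (∫ x in Set.Ioi (1 : ℝ),
        (P1 m).eval x * (P1 n).eval x * wgt 1 ζ x) = if m = n then (1 : ℝ) else 0)
    (z0 z1 : ℕ → ℕ → ℝ)
    (hzfac0 : ∀ n, P0 n = C (lc0 n) * ∏ i ∈ Finset.Icc 1 n, (X - C (z0 n i)))
    (hzfac1 : ∀ n, P1 n = C (lc1 n) * ∏ i ∈ Finset.Icc 1 n, (X - C (z1 n i)))
    (hzgt0 : ∀ n i, 1 ≤ i → i ≤ n → 1 < z0 n i)
    (hzgt1 : ∀ n i, 1 ≤ i → i ≤ n → 1 < z1 n i)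
    (hzmono0 : ∀ n i j, 1 ≤ i → i < j → j ≤ n → z0 n i < z0 n j)
    (hzmono1 : ∀ n i j, 1 ≤ i → i < j → j ≤ n → z1 n i < z1 n j)
    (p q r : ℕ → ℝ)
    (hp : ∀ n, p n = lc0 n / lc1 n)
    (hr : ∀ n, r (n + 1) = lc1 n / lc0 (n + 2))
    (hq : ∀ n, q n = ∫ x in Set.Ioi (1 : ℝ),
        (P0 (n + 1)).eval x * (P1 n).eval x * wgt 1 ζ x) :
    (∀ n, (X ^ 2 - 1) * P1 n =
      C (p n) * P0 n + C (q n) * P0 (n + 1) + C (r (n + 1)) * P0 (n + 2)) ∧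
    (∀ n, q n = (lc0 (n + 1) / lc1 n) *
      ∑ i ∈ Finset.Icc 1 (n + 1), (z1 (n + 1) i - z0 (n + 1) i)) ∧
    (∀ n, q n = (lc1 n / lc0 (n + 1)) *
      ((∑ i ∈ Finset.Icc 1 (n + 2), z0 (n + 2) i) - ∑ i ∈ Finset.Icc 1 n, z1 n i)) := by
  have hlc0ne : ∀ n, lc0 n ≠ 0 := fun n => (hlc0pos n).ne'
  have hlc1ne : ∀ n, lc1 n ≠ 0 := fun n => (hlc1pos n).ne'
  have hlcQ0 : ∀ n, (P0 n).leadingCoeff ≠ 0 := fun n => (hlc0 n) ▸ hlc0ne n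
  have hlcQ1 : ∀ n, (P1 n).leadingCoeff ≠ 0 := fun n => (hlc1 n) ▸ hlc1ne n
  have hd0 : ∀ k, Integrable (fun x => (P0 k).eval x * (P0 k).eval x * wgt 0 ζ x)
      (volume.restrict (Set.Ioi 1)) := by
    intro k; by_contra h
    have h2 := horth0 k k
    rw [if_pos rfl, MeasureTheory.integral_undef h] at h2
    norm_num at h2
  have hd1 : ∀ k, Integrable (fun x => (P1 k).eval x * (P1 k).eval x * wgt 1 ζ x)
      (volume.restrict (Set.Ioi 1)) := by
    intro k; by_contra h
    have h2 := horth1 k k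
    rw [if_pos rfl, MeasureTheory.integral_undef h] at h2
    norm_num at h2
  have hint0 := aux_integrable _ (wgt_measurable 0 ζ) (wgt_nonneg 0 ζ) P0 hd0
  have hint1 := aux_integrable _ (wgt_measurable 1 ζ) (wgt_nonneg 1 ζ) P1 hd1
  -- coeff basics
  have hc0top : ∀ n, (P0 n).coeff n = lc0 n := by
    intro n; rw [← hlc0, leadingCoeff, hdeg0]
  have hc1top : ∀ n, (P1 n).coeff n = lc1 n := by
    intro n; rw [← hlc1, leadingCoeff, hdeg1]
  have hsub0 : ∀ n, (P0 (n+1)).coeff n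
      = -(lc0 (n+1) * ∑ i ∈ Finset.Icc 1 (n+1), z0 (n+1) i) := by
    intro n
    have h := aux_subcoeff (lc0 (n+1)) (z0 (n+1)) (n+1) (by omega)
    rw [← hzfac0] at h
    simpa using h
  have hsub1 : ∀ n, (P1 (n+1)).coeff n
      = -(lc1 (n+1) * ∑ i ∈ Finset.Icc 1 (n+1), z1 (n+1) i) := by
    intro n
    have h := aux_subcoeff (lc1 (n+1)) (z1 (n+1)) (n+1) (by omega)
    rw [← hzfac1] at h
    simpa using h
  -- part 1
  have part1 : ∀ n, (X ^ 2 - 1 : Polynomial ℝ) * P1 n =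
      C (p n) * P0 n + C (q n) * P0 (n + 1) + C (r (n + 1)) * P0 (n + 2) := by
    intro n
    have hX2 : ((X : Polynomial ℝ) ^ 2 - 1).Monic := by
      have := monic_X_pow_sub_C (1 : ℝ) (n := 2) (by norm_num)
      simpa using this
    have hdX2 : ((X : Polynomial ℝ) ^ 2 - 1).natDegree = 2 := by
      have := natDegree_X_pow_sub_C (n := 2) (r := (1 : ℝ))
      simpa using this
    have hP1ne : P1 n ≠ 0 := leadingCoeff_ne_zero.mp (hlcQ1 n)
    have hdf : ((X ^ 2 - 1 : Polynomial ℝ) * P1 n).natDegree = n + 2 := by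
      rw [natDegree_mul hX2.ne_zero hP1ne, hdeg1, hdX2]
      omega
    obtain ⟨b, hb⟩ := aux_expand P0 hdeg0 hlcQ0 (n+2) _ hdf.le
    have hbj : ∀ j, j ≤ n + 2 → b j
        = ∫ x in Set.Ioi (1:ℝ), (P0 j).eval x * (P1 n).eval x * wgt 1 ζ x := by
      intro j hj
      have h1 := aux_coeff _ P0 horth0 hint0 b (n+2) j _ hb
      rw [if_pos hj] at h1
      rw [← h1]
      apply setIntegral_congr_fun measurableSet_Ioi
      intro x hx
      show eval x ((X ^ 2 - 1 : Polynomial ℝ) * P1 n) * eval x (P0 j) * wgt 0 ζ x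
        = eval x (P0 j) * eval x (P1 n) * wgt 1 ζ x
      rw [wgt_rel ζ x hx]
      simp only [eval_mul, eval_sub, eval_pow, eval_X, eval_one]
      ring
    have hbn2 : b (n+2) = r (n+1) := by
      have h1 : ((X ^ 2 - 1 : Polynomial ℝ) * P1 n).coeff (n+2) = lc1 n := by
        have h2 : ((X ^ 2 - 1 : Polynomial ℝ) * P1 n).leadingCoeff = lc1 n := by
          rw [leadingCoeff_mul, hX2.leadingCoeff, one_mul, hlc1]
        rw [← h2, leadingCoeff, hdf]
      have h2 := aux_topcoeff P0 hdeg0 b (n+2)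
      rw [← hb, h1, hc0top] at h2
      rw [hr]
      field_simp [hlc0ne (n+2)] at h2 ⊢
      linarith
    have hblow : ∀ j, j < n → b j = 0 := by
      intro j hj
      obtain ⟨c, hc⟩ := aux_expand P1 hdeg1 hlcQ1 j (P0 j) (by rw [hdeg0])
      have h2 := aux_coeff _ P1 horth1 hint1 c j n (P0 j) hc
      rw [if_neg (by omega)] at h2
      rw [hbj j (by omega), h2]
    have hbn : b n = p n := by
      obtain ⟨c, hc⟩ := aux_expand P1 hdeg1 hlcQ1 n (P0 n) (by rw [hdeg0])
      have h2 := aux_coeff _ P1 horth1 hint1 c n n (P0 n) hc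
      rw [if_pos le_rfl] at h2
      have h3 := aux_topcoeff P1 hdeg1 c n
      rw [← hc, hc0top, hc1top] at h3
      rw [hbj n (by omega), h2, hp]
      field_simp [hlc1ne n] at h3 ⊢
      linarith
    have hbn1 : b (n+1) = q n := by
      rw [hq, hbj (n+1) (by omega)]
    rw [hb, Finset.sum_range_succ, Finset.sum_range_succ, Finset.sum_range_succ]
    rw [Finset.sum_eq_zero (fun k hk => by
      rw [hblow k (Finset.mem_range.mp hk)]; simp), zero_add, hbn, hbn1, hbn2]
  refine ⟨part1, ?_, ?_⟩
  · -- part 2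
    intro n
    obtain ⟨c, hc⟩ := aux_expand P1 hdeg1 hlcQ1 (n+1) (P0 (n+1)) (by rw [hdeg0])
    have hqc : q n = c n := by
      have h2 := aux_coeff _ P1 horth1 hint1 c (n+1) n (P0 (n+1)) hc
      rw [if_pos (by omega)] at h2
      rw [hq]; exact h2
    have htop := aux_topcoeff P1 hdeg1 c (n+1)
    rw [← hc, hc0top, hc1top] at htop
    have hc' : P0 (n+1) = ∑ k ∈ Finset.range (n+2), C (c k) * P1 k := hc
    have hnext := aux_nextcoeff P1 hdeg1 c n
    rw [← hc', hc1top, hsub0, hsub1] at hnext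
    rw [hqc, Finset.sum_sub_distrib]
    have h1 := hlc1ne n
    have h2 := hlc1ne (n+1)
    field_simp
    linear_combination -hnext - (∑ i ∈ Finset.Icc 1 (n+1), z1 (n+1) i) * htop
  · -- part 3
    intro n
    have hid := congrArg (fun g => g.coeff (n+1)) (part1 n)
    simp only [coeff_add, coeff_C_mul] at hid
    have hL : ((X ^ 2 - 1 : Polynomial ℝ) * P1 n).coeff (n+1)
        = -(lc1 n * ∑ i ∈ Finset.Icc 1 n, z1 n i) := by
      have hexpand : ((X ^ 2 - 1 : Polynomial ℝ) * P1 n) = X^2 * P1 n - P1 n := by ring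
      rw [hexpand, coeff_sub,
        coeff_eq_zero_of_natDegree_lt (show (P1 n).natDegree < n+1 by rw [hdeg1]; omega),
        sub_zero]
      cases n with
      | zero =>
        rw [hzfac1 0]
        simp
      | succ m =>
        have h5 : ((X : Polynomial ℝ)^2 * P1 (m+1)).coeff (m+1+1) = (P1 (m+1)).coeff m := by
          have := coeff_X_pow_mul (P1 (m+1)) 2 m
          simpa [show m + 2 = m + 1 + 1 by omega] using this
        rw [h5, hsub1]
    have h0 : (P0 n).coeff (n+1) = 0 :=
      coeff_eq_zero_of_natDegree_lt (by rw [hdeg0]; omega)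
    have h2 : (P0 (n+2)).coeff (n+1)
        = -(lc0 (n+2) * ∑ i ∈ Finset.Icc 1 (n+2), z0 (n+2) i) := hsub0 (n+1)
    rw [hL, h0, hc0top, h2, hr] at hid
    have h3 := hlc0ne (n+1)
    have h4 := hlc0ne (n+2)
    field_simp at hid ⊢
    apply mul_right_cancel₀ h4
    linear_combination (-lc0 (n+2)) * hid
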